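/- For every positive integer p, ε_p > g(p) - g(p+1), where g(x) := (1/12)/(x + (1/30)/x). -/
import Mathlib


/-- Robbins' summand: `ε_p = (p + 1/2) log((p+1)/p) - 1`. -/
noncomputable def eps (p : ℕ) : ℝ :=
  ((p : ℝ) + 1/2) * Real.log (((p : ℝ) + 1) / p) - 1

/-- Depth-2 continued fraction with numerators `1/12` and `1/30`. -/
noncomputable def g (x : ℝ) : ℝ := (1/12) / (x + (1/30) / x)

/-- Taylor-type lower bound for `log((1+t)/(1-t))`. -/
lemma log_ratio_lb {t : ℝ} (ht0 : 0 < t) (ht1 : t < 1) :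
    Real.log (1 + t) - Real.log (1 - t) ≥
      2*t + 2*t^3/3 + 2*t^5/5 + 2*t^7/7 + 2*t^9/9 - 2*t^10/(1-t) := by
  have habs : |t| < 1 := by rw [abs_of_pos ht0]; exact ht1
  have habs' : |(-t)| < 1 := by rwa [abs_neg]
  have h1 := Real.abs_log_sub_add_sum_range_le habs 9
  have h2 := Real.abs_log_sub_add_sum_range_le habs' 9
  rw [abs_of_pos ht0] at h1
  rw [abs_neg, abs_of_pos ht0] at h2
  norm_num [Finset.sum_range_succ, abs_le, sub_neg_eq_add] at h1 h2
  obtain ⟨h1a, h1b⟩ := h1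
  obtain ⟨h2a, h2b⟩ := h2
  have h1t : 0 < 1 - t := by linarith
  ring_nf at h1a h1b h2a h2b ⊢
  linarith

/-- The polynomial-level inequality for real `x ≥ 1`. -/
lemma key_ineq {x : ℝ} (hx : 1 ≤ x) :
    ((x : ℝ) + 1/2) *
      (2*(1/(2*x+1)) + 2*(1/(2*x+1))^3/3 + 2*(1/(2*x+1))^5/5 + 2*(1/(2*x+1))^7/7
        + 2*(1/(2*x+1))^9/9 - 2*(1/(2*x+1))^10/(1-(1/(2*x+1)))) - 1 >
    g x - g (x + 1) := by
  have hx0 : (0:ℝ) < x := by linarith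
  have hu : (0:ℝ) < 2*x+1 := by linarith
  have hx1 : (0:ℝ) < x + 1 := by linarith
  have hd1 : (0:ℝ) < x + (1/30)/x := by positivity
  have hd2 : (0:ℝ) < (x+1) + (1/30)/(x+1) := by positivity
  have h1t : (0:ℝ) < 1 - 1/(2*x+1) := by
    rw [sub_pos, div_lt_one hu]; linarith
  rw [gt_iff_lt, ← sub_pos, g, g]
  have hq1 : (0:ℝ) < 30*x^2 + 1 := by positivity
  have hq2 : (0:ℝ) < 30*x^2 + 60*x + 31 := by nlinarith
  have hnum : (0:ℝ) < 254400*x^7 + 763200*x^6 + 988128*x^5 + 562506*x^4 + 5547*x^3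
      - 87081*x^2 - (1949/2)*x - 9765/2 := by
    nlinarith [pow_nonneg (sub_nonneg.2 hx) 2, pow_nonneg (sub_nonneg.2 hx) 3,
      pow_nonneg (sub_nonneg.2 hx) 4, pow_nonneg (sub_nonneg.2 hx) 5,
      pow_nonneg (sub_nonneg.2 hx) 6, pow_nonneg (sub_nonneg.2 hx) 7,
      sub_nonneg.2 hx]
  have hden : (0:ℝ) < 315 * x * (2*x+1)^8 * (30*x^2+1) * (30*x^2+60*x+31) := by
    positivity
  have heq : ((x : ℝ) + 1/2) *
      (2*(1/(2*x+1)) + 2*(1/(2*x+1))^3/3 + 2*(1/(2*x+1))^5/5 + 2*(1/(2*x+1))^7/7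
        + 2*(1/(2*x+1))^9/9 - 2*(1/(2*x+1))^10/(1-(1/(2*x+1)))) - 1 -
      ((1/12) / (x + (1/30)/x) - (1/12) / ((x+1) + (1/30)/(x+1))) =
      (254400*x^7 + 763200*x^6 + 988128*x^5 + 562506*x^4 + 5547*x^3
        - 87081*x^2 - (1949/2)*x - 9765/2) /
      (315 * x * (2*x+1)^8 * (30*x^2+1) * (30*x^2+60*x+31)) := by
    have hne1 : x + (1/30)/x ≠ 0 := ne_of_gt hd1
    have hne2 : (x+1) + (1/30)/(x+1) ≠ 0 := ne_of_gt hd2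
    have hne3 : (2*x+1) ≠ 0 := ne_of_gt hu
    have hne4 : (1:ℝ) - 1/(2*x+1) ≠ 0 := ne_of_gt h1t
    field_simp
    ring
  rw [heq]
  exact div_pos hnum hden

/-- For every positive integer `p`, `ε_p > g(p) - g(p+1)`. -/
theorem eps_gt_g_diff (p : ℕ) (hp : 0 < p) :
    eps p > g p - g ((p : ℝ) + 1) := by
  set x : ℝ := (p : ℝ) with hxdef
  have hx : 1 ≤ x := by rw [hxdef]; exact_mod_cast Nat.one_le_iff_ne_zero.mpr hp.ne'
  have hx0 : (0:ℝ) < x := by linarith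
  have hu : (0:ℝ) < 2*x+1 := by linarith
  set t : ℝ := 1/(2*x+1) with htdef
  have ht0 : 0 < t := by positivity
  have ht1 : t < 1 := by rw [htdef, div_lt_one hu]; linarith
  have h1t : (0:ℝ) < 1 - t := by linarith
  have h1pt : (0:ℝ) < 1 + t := by linarith
  have hratio : (x + 1) / x = (1 + t) / (1 - t) := by
    rw [htdef]
    rw [div_eq_div_iff (by positivity) (by rw [← htdef]; exact h1t.ne')]
    field_simp
    ring
  have hlog : Real.log ((x + 1) / x) = Real.log (1 + t) - Real.log (1 - t) := by
    rw [hratio, Real.log_div h1pt.ne' h1t.ne']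
  have hlb := log_ratio_lb ht0 ht1
  have hfac : (0:ℝ) < x + 1/2 := by linarith
  have heps : eps p ≥ (x + 1/2) *
      (2*t + 2*t^3/3 + 2*t^5/5 + 2*t^7/7 + 2*t^9/9 - 2*t^10/(1-t)) - 1 := by
    unfold eps
    rw [← hxdef, hlog]
    have := mul_le_mul_of_nonneg_left hlb (le_of_lt hfac)
    linarith
  have := key_ineq hx
  rw [← htdef] at this
  calc g x - g (x + 1) < _ := this
    _ ≤ eps p := heps
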